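/- arXiv:1303.2087 — 2 statements merged into one kernel-verified Lean document; each statement's English description precedes it below -/
import Mathlib

section
/- Let a DMZIC with weak interference be used n times memorylessly, with input blocks X1^n = (X11,...,X1n) and X2^n = (X21,...,X2n) that are independent of each other (but otherwise arbitrarily distributed within each block), and let Y1^n, Y2^n be the corresponding outputs. Then I(X1^n;Y1^n) + I(X2^n;Y2^n) <= sum_{i=1}^n [ I(X1i;Y1i) + I(X2i;Y2i) ]. -/
open scoped BigOperators

noncomputable section

namespace IT

/-- A probability mass function on a finite type. -/
def IsPMF {α : Type*} [Fintype α] (p : α → ℝ) : Prop :=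
  (∀ a, 0 ≤ p a) ∧ ∑ a, p a = 1

/-- The distribution (pushforward) of a random variable `X` under the pmf `μ`
on the sample space `Ω`. -/
def distOf {Ω α : Type*} [Fintype Ω] [DecidableEq α] (μ : Ω → ℝ) (X : Ω → α) : α → ℝ :=
  fun a => ∑ ω, if X ω = a then μ ω else 0

/-- Shannon entropy (base-2 logarithms) of a pmf on a finite type.
(Recall `Real.logb 2 0 = 0`, so the `0 log 0 = 0` convention is automatic.) -/
def ent {α : Type*} [Fintype α] (p : α → ℝ) : ℝ := -∑ a, p a * Real.logb 2 (p a)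

/-- Entropy `H(X)` of a finite-valued random variable `X` on `(Ω, μ)`. -/
def H {Ω α : Type*} [Fintype Ω] [Fintype α] [DecidableEq α] (μ : Ω → ℝ) (X : Ω → α) : ℝ :=
  ent (distOf μ X)

/-- Mutual information `I(X;Y)`. -/
def MI {Ω α β : Type*} [Fintype Ω] [Fintype α] [DecidableEq α] [Fintype β] [DecidableEq β]
    (μ : Ω → ℝ) (X : Ω → α) (Y : Ω → β) : ℝ :=
  H μ X + H μ Y - H μ (fun ω => (X ω, Y ω))

/-- Conditional mutual information `I(X;Y|Z)`. -/
def CMI {Ω α β γ : Type*} [Fintype Ω] [Fintype α] [DecidableEq α] [Fintype β] [DecidableEq β]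
    [Fintype γ] [DecidableEq γ] (μ : Ω → ℝ) (X : Ω → α) (Y : Ω → β) (Z : Ω → γ) : ℝ :=
  H μ (fun ω => (X ω, Z ω)) + H μ (fun ω => (Y ω, Z ω))
    - H μ (fun ω => (X ω, Y ω, Z ω)) - H μ Z

/-- `B` is conditionally independent of `A` given `C` (a Markov chain `A - C - B`). -/
def CondIndep {Ω α β γ : Type*} [Fintype Ω] [DecidableEq α] [DecidableEq β] [DecidableEq γ]
    (μ : Ω → ℝ) (A : Ω → α) (B : Ω → β) (C : Ω → γ) : Prop :=
  ∀ a b c,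
    distOf μ (fun ω => (A ω, B ω, C ω)) (a, b, c) * distOf μ C c =
      distOf μ (fun ω => (A ω, C ω)) (a, c) * distOf μ (fun ω => (B ω, C ω)) (b, c)

variable {A1 A2 B1 B2 : Type*}

/-- A discrete memoryless interference channel with input alphabets `A1, A2` and
output alphabets `B1, B2`: every pair of inputs yields a pmf on output pairs. -/
def IsChannel [Fintype B1] [Fintype B2] (W : A1 → A2 → B1 × B2 → ℝ) : Prop :=
  ∀ x1 x2, IsPMF (W x1 x2)

/-- DMZIC with weak interference: the transition probability factorizes as
`p(y1,y2|x1,x2) = p(y2|x2) q(y1|x1,y2)`, i.e. one-sided interference together with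
the Markov chain `X2 - (X1,Y2) - Y1`. -/
def WeakZ [Fintype B1] [Fintype B2] (W : A1 → A2 → B1 × B2 → ℝ) : Prop :=
  ∃ (p2 : A2 → B2 → ℝ) (q : A1 → B2 → B1 → ℝ),
    (∀ x2, IsPMF (p2 x2)) ∧ (∀ x1 y2, IsPMF (q x1 y2)) ∧
      ∀ x1 x2 y1 y2, W x1 x2 (y1, y2) = p2 x2 y2 * q x1 y2 y1

/-- Factorization `p(y1,y2|x1,x2) = p(y2|x1,x2) q(y1|x1,y2)`, i.e. the Markov chain
`X2 - (X1,Y2) - Y1`. -/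
def ChainX2X1Y2Y1 [Fintype B1] [Fintype B2] (W : A1 → A2 → B1 × B2 → ℝ) : Prop :=
  ∃ (pa : A1 → A2 → B2 → ℝ) (q : A1 → B2 → B1 → ℝ),
    (∀ x1 x2, IsPMF (pa x1 x2)) ∧ (∀ x1 y2, IsPMF (q x1 y2)) ∧
      ∀ x1 x2 y1 y2, W x1 x2 (y1, y2) = pa x1 x2 y2 * q x1 y2 y1

/-- The `n`-fold memoryless extension of the channel `W`. -/
def nFold (W : A1 → A2 → B1 × B2 → ℝ) (n : ℕ) (a : Fin n → A1) (b : Fin n → A2)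
    (y : (Fin n → B1) × (Fin n → B2)) : ℝ :=
  ∏ i, W (a i) (b i) (y.1 i, y.2 i)

/-- An `(n, M1, M2)` code for the interference channel. -/
structure Code (A1 A2 B1 B2 : Type*) (n M1 M2 : ℕ) where
  enc1 : Fin M1 → Fin n → A1
  enc2 : Fin M2 → Fin n → A2
  dec1 : (Fin n → B1) → Fin M1
  dec2 : (Fin n → B2) → Fin M2

/-- Average probability of error at receiver 1 (messages uniform and independent). -/
def err1 [Fintype B1] [Fintype B2] (W : A1 → A2 → B1 × B2 → ℝ) {n M1 M2 : ℕ}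
    (c : Code A1 A2 B1 B2 n M1 M2) : ℝ :=
  ((M1 : ℝ) * (M2 : ℝ))⁻¹ *
    ∑ w1 : Fin M1, ∑ w2 : Fin M2, ∑ y : (Fin n → B1) × (Fin n → B2),
      if c.dec1 y.1 ≠ w1 then nFold W n (c.enc1 w1) (c.enc2 w2) y else 0

/-- Average probability of error at receiver 2 (messages uniform and independent). -/
def err2 [Fintype B1] [Fintype B2] (W : A1 → A2 → B1 × B2 → ℝ) {n M1 M2 : ℕ}
    (c : Code A1 A2 B1 B2 n M1 M2) : ℝ :=
  ((M1 : ℝ) * (M2 : ℝ))⁻¹ *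
    ∑ w1 : Fin M1, ∑ w2 : Fin M2, ∑ y : (Fin n → B1) × (Fin n → B2),
      if c.dec2 y.2 ≠ w2 then nFold W n (c.enc1 w1) (c.enc2 w2) y else 0

/-- A (nonnegative) rate pair `(R1, R2)` is achievable if there are codes of blocklength `n`,
with at least `2 ^ (n R1)` and `2 ^ (n R2)` messages, whose average error probabilities at
the two receivers can be made arbitrarily small. -/
def Achievable [Fintype B1] [Fintype B2] (W : A1 → A2 → B1 × B2 → ℝ) (R1 R2 : ℝ) : Prop :=
  0 ≤ R1 ∧ 0 ≤ R2 ∧ ∀ ε : ℝ, 0 < ε →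
    ∃ (n M1 M2 : ℕ) (c : Code A1 A2 B1 B2 n M1 M2), 0 < n ∧
      (2 : ℝ) ^ ((n : ℝ) * R1) ≤ (M1 : ℝ) ∧ (2 : ℝ) ^ ((n : ℝ) * R2) ≤ (M2 : ℝ) ∧
      err1 W c ≤ ε ∧ err2 W c ≤ ε

/-- The sum-rate capacity: the supremum of `R1 + R2` over achievable rate pairs. -/
def sumCapacity [Fintype B1] [Fintype B2] (W : A1 → A2 → B1 × B2 → ℝ) : ℝ :=
  sSup {r : ℝ | ∃ R1 R2 : ℝ, Achievable W R1 R2 ∧ r = R1 + R2}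

/-- The capacity region: the closure of the set of achievable rate pairs. -/
def capacityRegion [Fintype B1] [Fintype B2] (W : A1 → A2 → B1 × B2 → ℝ) : Set (ℝ × ℝ) :=
  closure {p : ℝ × ℝ | Achievable W p.1 p.2}

/-- The joint pmf of `(X1, X2, Y1, Y2)` when the product input `p1 × p2` is fed to `W`. -/
def jointOf (W : A1 → A2 → B1 × B2 → ℝ) (p1 : A1 → ℝ) (p2 : A2 → ℝ) :
    A1 × A2 × B1 × B2 → ℝ :=
  fun z => p1 z.1 * p2 z.2.1 * W z.1 z.2.1 (z.2.2.1, z.2.2.2)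

/-- Coordinate projections on `A1 × A2 × B1 × B2`. -/
def pX1 : A1 × A2 × B1 × B2 → A1 := fun z => z.1
def pX2 : A1 × A2 × B1 × B2 → A2 := fun z => z.2.1
def pY1 : A1 × A2 × B1 × B2 → B1 := fun z => z.2.2.1
def pY2 : A1 × A2 × B1 × B2 → B2 := fun z => z.2.2.2

/-- The binary entropy function (base-2 logarithms). -/
def h2 (t : ℝ) : ℝ := -(t * Real.logb 2 t) - (1 - t) * Real.logb 2 (1 - t)


open Finset

section helpers
variable {Ω : Type*} [Fintype Ω] {α β : Type*}

lemma sum_mul_comp [Fintype α] [DecidableEq α] (μ : Ω → ℝ) (T : Ω → α) (φ : α → ℝ) :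
    ∑ a, distOf μ T a * φ a = ∑ ω, μ ω * φ (T ω) := by
  unfold distOf
  simp only [sum_mul, ite_mul, zero_mul]
  rw [Finset.sum_comm]
  simp

lemma distOf_nonneg [DecidableEq α] {μ : Ω → ℝ} (hμ : ∀ ω, 0 ≤ μ ω) (X : Ω → α) (a : α) :
    0 ≤ distOf μ X a :=
  Finset.sum_nonneg fun ω _ => by split <;> simp [hμ ω]

lemma le_distOf [DecidableEq α] {μ : Ω → ℝ} (hμ : ∀ ω, 0 ≤ μ ω) (X : Ω → α) (ω : Ω) :
    μ ω ≤ distOf μ X (X ω) := by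
  classical
  have h := Finset.single_le_sum (f := fun ω' => if X ω' = X ω then μ ω' else 0)
    (fun ω' _ => by split <;> simp [hμ ω']) (Finset.mem_univ ω)
  simpa [distOf] using h

lemma sum_distOf [Fintype α] [DecidableEq α] (μ : Ω → ℝ) (X : Ω → α) :
    ∑ a, distOf μ X a = ∑ ω, μ ω := by
  have := sum_mul_comp μ X (fun _ => 1)
  simpa using this

lemma distOf_comp [Fintype α] [DecidableEq α] [DecidableEq β] (μ : Ω → ℝ) (T : Ω → α)
    (g : α → β) (b : β) :
    distOf μ (fun ω => g (T ω)) b = distOf (distOf μ T) g b := by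
  unfold distOf
  calc ∑ ω, (if g (T ω) = b then μ ω else 0)
      = ∑ ω, μ ω * (if g (T ω) = b then (1:ℝ) else 0) := by
        refine Finset.sum_congr rfl fun ω _ => ?_
        split <;> simp
    _ = ∑ a, distOf μ T a * (if g a = b then (1:ℝ) else 0) :=
        (sum_mul_comp μ T fun a => if g a = b then (1:ℝ) else 0).symm
    _ = ∑ a : α, (if g a = b then distOf μ T a else 0) := by
        refine Finset.sum_congr rfl fun a _ => ?_
        split <;> simp
    _ = _ := by unfold distOf; rfl

lemma distOf_marginal_snd [Fintype α] [DecidableEq α] [DecidableEq β] (μ : Ω → ℝ)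
    (X : Ω → α) (Y : Ω → β) (b : β) :
    distOf μ Y b = ∑ a, distOf μ (fun ω => (X ω, Y ω)) (a, b) := by
  unfold distOf
  rw [Finset.sum_comm]
  refine Finset.sum_congr rfl fun ω _ => ?_
  simp only [Prod.mk.injEq]
  by_cases h : Y ω = b <;> simp [h]

lemma H_eq_sum [Fintype α] [DecidableEq α] (μ : Ω → ℝ) (X : Ω → α) :
    H μ X = -∑ ω, μ ω * Real.logb 2 (distOf μ X (X ω)) := by
  unfold H ent
  rw [sum_mul_comp μ X (fun a => Real.logb 2 (distOf μ X a))]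

lemma MI_eq_sum [Fintype α] [DecidableEq α] [Fintype β] [DecidableEq β]
    (μ : Ω → ℝ) (X : Ω → α) (Y : Ω → β) :
    MI μ X Y = ∑ ω, μ ω *
      (Real.logb 2 (distOf μ (fun ω => (X ω, Y ω)) (X ω, Y ω))
        - Real.logb 2 (distOf μ X (X ω)) - Real.logb 2 (distOf μ Y (Y ω))) := by
  unfold MI
  rw [H_eq_sum μ X, H_eq_sum μ Y, H_eq_sum μ (fun ω => (X ω, Y ω))]
  rw [← Finset.sum_neg_distrib, ← Finset.sum_neg_distrib, ← Finset.sum_neg_distrib,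
    ← Finset.sum_add_distrib, ← Finset.sum_sub_distrib]
  refine Finset.sum_congr rfl fun ω _ => ?_
  ring

lemma sum_prod_eval {n : ℕ} [Fintype β] [DecidableEq β] (g : Fin n → β → ℝ) :
    ∑ y : Fin n → β, ∏ i, g i (y i) = ∏ i, ∑ b, g i b :=
  (Fintype.prod_sum g).symm

lemma sum_prod_eval_pin {n : ℕ} [Fintype β] [DecidableEq β] (g : Fin n → β → ℝ)
    (i : Fin n) (s : β → ℝ) :
    ∑ y : Fin n → β, s (y i) * ∏ j, g j (y j)
      = (∑ b, s b * g i b) * ∏ j ∈ Finset.univ.erase i, ∑ b, g j b := by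
  classical
  set h : Fin n → β → ℝ := fun j b => if j = i then s b * g j b else g j b with hh
  have key : ∀ y : Fin n → β, s (y i) * ∏ j, g j (y j) = ∏ j, h j (y j) := by
    intro y
    rw [← Finset.mul_prod_erase univ (fun j => g j (y j)) (mem_univ i),
        ← Finset.mul_prod_erase univ (fun j => h j (y j)) (mem_univ i)]
    have h1 : h i (y i) = s (y i) * g i (y i) := by simp [hh]
    have h2 : ∀ j ∈ Finset.univ.erase i, h j (y j) = g j (y j) := by
      intro j hj
      simp [hh, Finset.ne_of_mem_erase hj]
    rw [h1, Finset.prod_congr rfl h2, mul_assoc]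
  calc ∑ y : Fin n → β, s (y i) * ∏ j, g j (y j) = ∑ y : Fin n → β, ∏ j, h j (y j) :=
        Finset.sum_congr rfl fun y _ => key y
    _ = ∏ j, ∑ b, h j b := sum_prod_eval h
    _ = (∑ b, h i b) * ∏ j ∈ Finset.univ.erase i, ∑ b, h j b :=
        (Finset.mul_prod_erase univ (fun j => ∑ b, h j b) (mem_univ i)).symm
    _ = _ := by
        congr 1
        · simp [hh]
        · exact Finset.prod_congr rfl fun j hj => Finset.sum_congr rfl fun b _ => by
            simp [hh, Finset.ne_of_mem_erase hj]

lemma mul_inv_self_le_one {a : ℝ} (ha : 0 ≤ a) : a * a⁻¹ ≤ 1 := by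
  rcases eq_or_lt_of_le ha with h | h
  · simp [← h]
  · rw [mul_inv_cancel₀ h.ne']
end helpers

set_option linter.unusedSectionVars false
set_option linter.unusedVariables false
set_option maxHeartbeats 1000000

section Main
variable {A1 A2 B1 B2 : Type} [Fintype A1] [DecidableEq A1] [Fintype A2] [DecidableEq A2]
  [Fintype B1] [DecidableEq B1] [Fintype B2] [DecidableEq B2] {n : ℕ}
  (P1 : (Fin n → A1) → ℝ) (P2 : (Fin n → A2) → ℝ) (p2 : A2 → B2 → ℝ) (q : A1 → B2 → B1 → ℝ)

def mw : (Fin n → A1) × (Fin n → A2) × (Fin n → B1) × (Fin n → B2) → ℝ :=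
  fun z => P1 z.1 * P2 z.2.1 * ∏ i, (p2 (z.2.1 i) (z.2.2.2 i) * q (z.1 i) (z.2.2.2 i) (z.2.2.1 i))
def Kc : (Fin n → A1) → (Fin n → B1) → ℝ :=
  fun x1 y1 => ∑ x2 : Fin n → A2, ∑ y2 : Fin n → B2,
    P2 x2 * ∏ i, (p2 (x2 i) (y2 i) * q (x1 i) (y2 i) (y1 i))
def P1i (i : Fin n) : A1 → ℝ := distOf P1 (fun x1 => x1 i)
def P2i (i : Fin n) : A2 → ℝ := distOf P2 (fun x2 => x2 i)
def ri (i : Fin n) : B2 → ℝ := fun b => ∑ a, P2i P2 i a * p2 a b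
def ki (i : Fin n) : A1 → B1 → ℝ := fun a c => ∑ b, ri P2 p2 i b * q a b c
def rn : (Fin n → B2) → ℝ := fun y2 => ∑ x2 : Fin n → A2, P2 x2 * ∏ i, p2 (x2 i) (y2 i)
def dY1 : (Fin n → B1) → ℝ := distOf (mw P1 P2 p2 q) (fun z => z.2.2.1)
def dY1i (i : Fin n) : B1 → ℝ := distOf (mw P1 P2 p2 q) (fun z => z.2.2.1 i)
def Fq : (Fin n → A1) × (Fin n → A2) × (Fin n → B1) × (Fin n → B2) → ℝ :=
  fun z => Kc P2 p2 q z.1 z.2.2.1 * (dY1 P1 P2 p2 q z.2.2.1)⁻¹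
    * (∏ i, dY1i P1 P2 p2 q i (z.2.2.1 i))
    * ((rn P2 p2 z.2.2.2)⁻¹ * ∏ i, ri P2 p2 i (z.2.2.2 i))
    * (∏ i, ki P2 p2 q i (z.1 i) (z.2.2.1 i))⁻¹

variable (hP1 : IsPMF P1) (hP2 : IsPMF P2) (hp2 : ∀ x2, IsPMF (p2 x2))
  (hq : ∀ x1 y2, IsPMF (q x1 y2))

include hP1 hP2 hp2 hq
lemma collapse_y1 (x1 : Fin n → A1) (x2 : Fin n → A2) (y2 : Fin n → B2) :
    ∑ y1 : Fin n → B1, ∏ i, (p2 (x2 i) (y2 i) * q (x1 i) (y2 i) (y1 i))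
      = ∏ i, p2 (x2 i) (y2 i) := by
  rw [sum_prod_eval (fun i c => p2 (x2 i) (y2 i) * q (x1 i) (y2 i) c)]
  refine Finset.prod_congr rfl fun i _ => ?_
  rw [← Finset.mul_sum, (hq _ _).2, mul_one]

lemma collapse_y1y2 (x1 : Fin n → A1) (x2 : Fin n → A2) :
    ∑ y1 : Fin n → B1, ∑ y2 : Fin n → B2,
        ∏ i, (p2 (x2 i) (y2 i) * q (x1 i) (y2 i) (y1 i)) = 1 := by
  rw [Finset.sum_comm]
  rw [Finset.sum_congr rfl fun y2 _ => collapse_y1 P1 P2 p2 q hP1 hP2 hp2 hq x1 x2 y2,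
    sum_prod_eval (fun i b => p2 (x2 i) b)]
  simp [(hp2 _).2]

lemma sum_x2y1y2 (x1 : Fin n → A1) :
    ∑ x2 : Fin n → A2, P2 x2 * ∑ y1 : Fin n → B1, ∑ y2 : Fin n → B2,
        ∏ i, (p2 (x2 i) (y2 i) * q (x1 i) (y2 i) (y1 i)) = 1 := by
  have h : ∀ x2 : Fin n → A2, P2 x2 * (∑ y1 : Fin n → B1, ∑ y2 : Fin n → B2,
      ∏ i, (p2 (x2 i) (y2 i) * q (x1 i) (y2 i) (y1 i))) = P2 x2 := by
    intro x2
    rw [collapse_y1y2 P1 P2 p2 q hP1 hP2 hp2 hq x1 x2, mul_one]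
  rw [Finset.sum_congr rfl fun x2 _ => h x2, hP2.2]

lemma mw_total : ∑ z, mw P1 P2 p2 q z = 1 := by
  unfold mw
  simp only [Fintype.sum_prod_type]
  have h : ∀ x1, (∑ x2 : Fin n → A2, ∑ y1 : Fin n → B1, ∑ y2 : Fin n → B2,
      P1 x1 * P2 x2 * ∏ i, (p2 (x2 i) (y2 i) * q (x1 i) (y2 i) (y1 i))) = P1 x1 := by
    intro x1
    simp only [mul_assoc, ← Finset.mul_sum]
    rw [sum_x2y1y2 P1 P2 p2 q hP1 hP2 hp2 hq x1, mul_one]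
  rw [Finset.sum_congr rfl fun x1 _ => h x1, hP1.2]

/-- M1 -/
lemma distOf_X1 : distOf (mw P1 P2 p2 q) (fun z => z.1) = P1 := by
  funext a
  unfold distOf mw
  simp only [Fintype.sum_prod_type]
  have h1 : ∀ x1, (∑ x2 : Fin n → A2, ∑ y1 : Fin n → B1, ∑ y2 : Fin n → B2,
      if x1 = a then P1 x1 * P2 x2 * ∏ i, (p2 (x2 i) (y2 i) * q (x1 i) (y2 i) (y1 i)) else 0)
      = if x1 = a then P1 x1 else 0 := by
    intro x1
    by_cases h : x1 = a
    · simp only [h, if_true]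
      simp only [mul_assoc, ← Finset.mul_sum]
      rw [sum_x2y1y2 P1 P2 p2 q hP1 hP2 hp2 hq a, mul_one]
    · simp [h]
  rw [Finset.sum_congr rfl fun x1 _ => h1 x1]
  simp

/-- M2 -/
lemma distOf_X2 : distOf (mw P1 P2 p2 q) (fun z => z.2.1) = P2 := by
  funext a
  unfold distOf mw
  simp only [Fintype.sum_prod_type]
  have h1 : ∀ x1 x2, (∑ y1 : Fin n → B1, ∑ y2 : Fin n → B2,
      if x2 = a then P1 x1 * P2 x2 * ∏ i, (p2 (x2 i) (y2 i) * q (x1 i) (y2 i) (y1 i)) else 0)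
      = if x2 = a then P1 x1 * P2 x2 else 0 := by
    intro x1 x2
    by_cases h : x2 = a
    · simp only [h, if_true]
      simp only [mul_assoc, ← Finset.mul_sum]
      rw [collapse_y1y2 P1 P2 p2 q hP1 hP2 hp2 hq x1 a, mul_one]
    · simp [h]
  rw [Finset.sum_congr rfl fun x1 _ => Finset.sum_congr rfl fun x2 _ => h1 x1 x2]
  simp only [Finset.sum_ite_eq', Finset.mem_univ, if_true]
  rw [← Finset.sum_mul, hP1.2, one_mul]

/-- M3 -/
lemma distOf_X1Y1 (x1 : Fin n → A1) (y1 : Fin n → B1) :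
    distOf (mw P1 P2 p2 q) (fun z => (z.1, z.2.2.1)) (x1, y1) = P1 x1 * Kc P2 p2 q x1 y1 := by
  unfold distOf mw Kc
  simp only [Fintype.sum_prod_type, Prod.mk.injEq]
  have h1 : ∀ u, (∑ x2 : Fin n → A2, ∑ v : Fin n → B1, ∑ y2 : Fin n → B2,
      if u = x1 ∧ v = y1 then P1 u * P2 x2 * ∏ i, (p2 (x2 i) (y2 i) * q (u i) (y2 i) (v i)) else 0)
      = if u = x1 then (∑ x2 : Fin n → A2, ∑ y2 : Fin n → B2,
          P1 x1 * P2 x2 * ∏ i, (p2 (x2 i) (y2 i) * q (x1 i) (y2 i) (y1 i))) else 0 := by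
    intro u
    by_cases h : u = x1
    · simp only [h, if_true, true_and]
      refine Finset.sum_congr rfl fun x2 _ => ?_
      rw [Finset.sum_comm]
      refine Finset.sum_congr rfl fun y2 _ => ?_
      simp
    · simp [h]
  rw [Finset.sum_congr rfl fun u _ => h1 u]
  simp only [Finset.sum_ite_eq', Finset.mem_univ, if_true]
  simp only [mul_assoc, ← Finset.mul_sum]

/-- M4 -/
lemma distOf_X2Y2 (x2 : Fin n → A2) (y2 : Fin n → B2) :
    distOf (mw P1 P2 p2 q) (fun z => (z.2.1, z.2.2.2)) (x2, y2)
      = P2 x2 * ∏ i, p2 (x2 i) (y2 i) := by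
  unfold distOf mw
  simp only [Fintype.sum_prod_type, Prod.mk.injEq]
  have h1 : ∀ x1 u, (∑ y1 : Fin n → B1, ∑ v : Fin n → B2,
      if u = x2 ∧ v = y2 then P1 x1 * P2 u * ∏ i, (p2 (u i) (v i) * q (x1 i) (v i) (y1 i)) else 0)
      = if u = x2 then P1 x1 * P2 x2 * ∏ i, p2 (x2 i) (y2 i) else 0 := by
    intro x1 u
    by_cases h : u = x2
    · simp only [h, if_true, true_and]
      have h2 : ∀ y1 : Fin n → B1, (∑ v : Fin n → B2,
          if v = y2 then P1 x1 * P2 x2 * ∏ i, (p2 (x2 i) (v i) * q (x1 i) (v i) (y1 i)) else 0)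
          = P1 x1 * P2 x2 * ∏ i, (p2 (x2 i) (y2 i) * q (x1 i) (y2 i) (y1 i)) := by
        intro y1; simp
      rw [Finset.sum_congr rfl fun y1 _ => h2 y1]
      simp only [mul_assoc, ← Finset.mul_sum]
      rw [collapse_y1 P1 P2 p2 q hP1 hP2 hp2 hq x1 x2 y2]
    · simp [h]
  rw [Finset.sum_congr rfl fun x1 _ => Finset.sum_congr rfl fun u _ => h1 x1 u]
  simp only [Finset.sum_ite_eq', Finset.mem_univ, if_true]
  rw [← Finset.sum_mul, ← Finset.sum_mul, hP1.2, one_mul]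

/-- collapse of the inner `(y1, y2)`-block sums with `y2` pinned at coordinate `i` -/
lemma collapse_pin_y2 (i : Fin n) (b : B2) (x1 : Fin n → A1) (x2 : Fin n → A2) :
    ∑ y1 : Fin n → B1, ∑ y2 : Fin n → B2,
        (if y2 i = b then ∏ j, (p2 (x2 j) (y2 j) * q (x1 j) (y2 j) (y1 j)) else 0)
      = p2 (x2 i) b := by
  rw [Finset.sum_comm]
  have h1 : ∀ y2 : Fin n → B2, (∑ y1 : Fin n → B1,
      if y2 i = b then ∏ j, (p2 (x2 j) (y2 j) * q (x1 j) (y2 j) (y1 j)) else 0)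
      = (if y2 i = b then (1:ℝ) else 0) * ∏ j, p2 (x2 j) (y2 j) := by
    intro y2
    by_cases h : y2 i = b
    · simp only [h, if_true, one_mul]
      exact collapse_y1 P1 P2 p2 q hP1 hP2 hp2 hq x1 x2 y2
    · simp [h]
  rw [Finset.sum_congr rfl fun y2 _ => h1 y2,
    sum_prod_eval_pin (fun j b' => p2 (x2 j) b') i (fun b' => if b' = b then (1:ℝ) else 0)]
  have h2 : (∑ b' : B2, (if b' = b then (1:ℝ) else 0) * p2 (x2 i) b') = p2 (x2 i) b := by
    simp [ite_mul]
  rw [h2]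
  have h3 : ∀ j ∈ Finset.univ.erase i, (∑ b' : B2, p2 (x2 j) b') = 1 :=
    fun j _ => (hp2 _).2
  rw [Finset.prod_congr rfl h3, Finset.prod_const_one, mul_one]

/-- collapse of the inner `(y1, y2)`-block sums with `y1` pinned at coordinate `i` -/
lemma collapse_pin_y1 (i : Fin n) (c : B1) (x1 : Fin n → A1) (x2 : Fin n → A2) :
    ∑ y1 : Fin n → B1, ∑ y2 : Fin n → B2,
        (if y1 i = c then ∏ j, (p2 (x2 j) (y2 j) * q (x1 j) (y2 j) (y1 j)) else 0)
      = ∑ b, p2 (x2 i) b * q (x1 i) b c := by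
  have h1 : ∀ y1 : Fin n → B1, (∑ y2 : Fin n → B2,
      if y1 i = c then ∏ j, (p2 (x2 j) (y2 j) * q (x1 j) (y2 j) (y1 j)) else 0)
      = (if y1 i = c then (1:ℝ) else 0) *
          ∏ j, ∑ b, p2 (x2 j) b * q (x1 j) b (y1 j) := by
    intro y1
    by_cases h : y1 i = c
    · simp only [h, if_true, one_mul]
      exact sum_prod_eval (fun j b => p2 (x2 j) b * q (x1 j) b (y1 j))
    · simp [h]
  rw [Finset.sum_congr rfl fun y1 _ => h1 y1,
    sum_prod_eval_pin (fun j d => ∑ b, p2 (x2 j) b * q (x1 j) b d) i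
      (fun d => if d = c then (1:ℝ) else 0)]
  have h2 : (∑ d : B1, (if d = c then (1:ℝ) else 0) * ∑ b, p2 (x2 i) b * q (x1 i) b d)
      = ∑ b, p2 (x2 i) b * q (x1 i) b c := by
    simp [ite_mul]
  rw [h2]
  have h3 : ∀ j ∈ Finset.univ.erase i, (∑ d : B1, ∑ b, p2 (x2 j) b * q (x1 j) b d) = 1 := by
    intro j _
    rw [Finset.sum_comm]
    have : ∀ b, (∑ d : B1, p2 (x2 j) b * q (x1 j) b d) = p2 (x2 j) b := by
      intro b; rw [← Finset.mul_sum, (hq _ _).2, mul_one]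
    rw [Finset.sum_congr rfl fun b _ => this b, (hp2 _).2]
  rw [Finset.prod_congr rfl h3, Finset.prod_const_one, mul_one]

/-- M6 -/
lemma distOf_X2Y2i (i : Fin n) (a : A2) (b : B2) :
    distOf (mw P1 P2 p2 q) (fun z => (z.2.1 i, z.2.2.2 i)) (a, b)
      = P2i P2 i a * p2 a b := by
  unfold distOf mw
  simp only [Fintype.sum_prod_type, Prod.mk.injEq, ite_and]
  have h1 : ∀ x1 x2, (∑ y1 : Fin n → B1, ∑ y2 : Fin n → B2,
      if x2 i = a then (if y2 i = b then
        P1 x1 * P2 x2 * ∏ j, (p2 (x2 j) (y2 j) * q (x1 j) (y2 j) (y1 j)) else 0) else 0)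
      = P1 x1 * (P2 x2 * (if x2 i = a then p2 (x2 i) b else 0)) := by
    intro x1 x2
    by_cases h : x2 i = a
    · simp only [h, if_true]
      have := collapse_pin_y2 P1 P2 p2 q hP1 hP2 hp2 hq i b x1 x2
      calc ∑ y1 : Fin n → B1, ∑ y2 : Fin n → B2, (if y2 i = b then
            P1 x1 * P2 x2 * ∏ j, (p2 (x2 j) (y2 j) * q (x1 j) (y2 j) (y1 j)) else 0)
          = P1 x1 * P2 x2 * ∑ y1 : Fin n → B1, ∑ y2 : Fin n → B2, (if y2 i = b then
            ∏ j, (p2 (x2 j) (y2 j) * q (x1 j) (y2 j) (y1 j)) else 0) := by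
            simp only [Finset.mul_sum]
            refine Finset.sum_congr rfl fun y1 _ => Finset.sum_congr rfl fun y2 _ => ?_
            split <;> simp
        _ = P1 x1 * P2 x2 * p2 (x2 i) b := by rw [this]
        _ = P1 x1 * (P2 x2 * p2 (x2 i) b) := by ring
        _ = P1 x1 * (P2 x2 * p2 a b) := by rw [h]
    · simp [h]
  rw [Finset.sum_congr rfl fun x1 _ => Finset.sum_congr rfl fun x2 _ => h1 x1 x2]
  have h2 : ∀ x1, (∑ x2 : Fin n → A2, P1 x1 * (P2 x2 * (if x2 i = a then p2 (x2 i) b else 0)))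
      = P1 x1 * (P2i P2 i a * p2 a b) := by
    intro x1
    rw [← Finset.mul_sum]
    congr 1
    have := sum_mul_comp P2 (fun x2 => x2 i) (fun a' => if a' = a then p2 a' b else 0)
    rw [← this]
    simp only [mul_ite, mul_zero]
    rw [Finset.sum_ite_eq' Finset.univ a (fun a' => distOf P2 (fun x2 => x2 i) a' * p2 a' b)]
    simp [P2i]
  rw [Finset.sum_congr rfl fun x1 _ => h2 x1, ← Finset.sum_mul, hP1.2, one_mul]

/-- M5 -/
lemma distOf_X1Y1i (i : Fin n) (a : A1) (c : B1) :
    distOf (mw P1 P2 p2 q) (fun z => (z.1 i, z.2.2.1 i)) (a, c)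
      = P1i P1 i a * ki P2 p2 q i a c := by
  unfold distOf mw
  simp only [Fintype.sum_prod_type, Prod.mk.injEq, ite_and]
  have h1 : ∀ x1 x2, (∑ y1 : Fin n → B1, ∑ y2 : Fin n → B2,
      if x1 i = a then (if y1 i = c then
        P1 x1 * P2 x2 * ∏ j, (p2 (x2 j) (y2 j) * q (x1 j) (y2 j) (y1 j)) else 0) else 0)
      = (if x1 i = a then (1:ℝ) else 0) * P1 x1 *
          (P2 x2 * ∑ b, p2 (x2 i) b * q (x1 i) b c) := by
    intro x1 x2
    by_cases h : x1 i = a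
    · simp only [h, if_true, one_mul]
      have hc := collapse_pin_y1 P1 P2 p2 q hP1 hP2 hp2 hq i c x1 x2
      calc ∑ y1 : Fin n → B1, ∑ y2 : Fin n → B2, (if y1 i = c then
            P1 x1 * P2 x2 * ∏ j, (p2 (x2 j) (y2 j) * q (x1 j) (y2 j) (y1 j)) else 0)
          = P1 x1 * P2 x2 * ∑ y1 : Fin n → B1, ∑ y2 : Fin n → B2, (if y1 i = c then
            ∏ j, (p2 (x2 j) (y2 j) * q (x1 j) (y2 j) (y1 j)) else 0) := by
            simp only [Finset.mul_sum]
            refine Finset.sum_congr rfl fun y1 _ => Finset.sum_congr rfl fun y2 _ => ?_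
            split <;> simp
        _ = P1 x1 * P2 x2 * ∑ b, p2 (x2 i) b * q (x1 i) b c := by rw [hc]
        _ = P1 x1 * (P2 x2 * ∑ b, p2 (x2 i) b * q (x1 i) b c) := by ring
        _ = P1 x1 * (P2 x2 * ∑ b, p2 (x2 i) b * q a b c) := by rw [h]
    · simp [h]
  rw [Finset.sum_congr rfl fun x1 _ => Finset.sum_congr rfl fun x2 _ => h1 x1 x2]
  have h2 : ∀ x1, (∑ x2 : Fin n → A2, (if x1 i = a then (1:ℝ) else 0) * P1 x1 *
      (P2 x2 * ∑ b, p2 (x2 i) b * q (x1 i) b c))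
      = P1 x1 * (if x1 i = a then ki P2 p2 q i (x1 i) c else 0) := by
    intro x1
    rw [← Finset.mul_sum]
    have hx2 : (∑ x2 : Fin n → A2, P2 x2 * ∑ b, p2 (x2 i) b * q (x1 i) b c)
        = ki P2 p2 q i (x1 i) c := by
      rw [← sum_mul_comp P2 (fun x2 => x2 i) (fun a2 => ∑ b, p2 a2 b * q (x1 i) b c)]
      unfold ki ri
      simp only [Finset.mul_sum, Finset.sum_mul]
      rw [Finset.sum_comm]
      refine Finset.sum_congr rfl fun b _ => Finset.sum_congr rfl fun a2 _ => ?_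
      unfold P2i
      ring
    rw [hx2]
    by_cases h : x1 i = a <;> simp [h]
  rw [Finset.sum_congr rfl fun x1 _ => h2 x1]
  rw [← sum_mul_comp P1 (fun x1 => x1 i) (fun a' => if a' = a then ki P2 p2 q i a' c else 0)]
  simp only [mul_ite, mul_zero]
  rw [Finset.sum_ite_eq' Finset.univ a (fun a' => distOf P1 (fun x1 => x1 i) a' * ki P2 p2 q i a' c)]
  simp [P1i]

lemma mw_nonneg (z : (Fin n → A1) × (Fin n → A2) × (Fin n → B1) × (Fin n → B2)) :
    0 ≤ mw P1 P2 p2 q z := by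
  unfold mw
  have := hP1.1 z.1; have := hP2.1 z.2.1
  refine mul_nonneg (mul_nonneg (hP1.1 _) (hP2.1 _)) (Finset.prod_nonneg fun i _ =>
    mul_nonneg ((hp2 _).1 _) ((hq _ _).1 _))

lemma ri_nonneg (i : Fin n) (b : B2) : 0 ≤ ri P2 p2 i b :=
  Finset.sum_nonneg fun a _ => mul_nonneg (distOf_nonneg hP2.1 _ _) ((hp2 _).1 _)

lemma ki_nonneg (i : Fin n) (a : A1) (c : B1) : 0 ≤ ki P2 p2 q i a c :=
  Finset.sum_nonneg fun b _ => mul_nonneg (ri_nonneg P1 P2 p2 q hP1 hP2 hp2 hq i b) ((hq _ _).1 _)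

lemma Kc_nonneg (x1 : Fin n → A1) (y1 : Fin n → B1) : 0 ≤ Kc P2 p2 q x1 y1 :=
  Finset.sum_nonneg fun x2 _ => Finset.sum_nonneg fun y2 _ =>
    mul_nonneg (hP2.1 _) (Finset.prod_nonneg fun i _ =>
      mul_nonneg ((hp2 _).1 _) ((hq _ _).1 _))

lemma rn_nonneg (y2 : Fin n → B2) : 0 ≤ rn P2 p2 y2 :=
  Finset.sum_nonneg fun x2 _ => mul_nonneg (hP2.1 _) (Finset.prod_nonneg fun i _ => (hp2 _).1 _)

lemma dY1_eq (y1 : Fin n → B1) :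
    dY1 P1 P2 p2 q y1 = ∑ x1, P1 x1 * Kc P2 p2 q x1 y1 := by
  unfold dY1
  rw [distOf_marginal_snd (mw P1 P2 p2 q) (fun z => z.1) (fun z => z.2.2.1) y1]
  exact Finset.sum_congr rfl fun x1 _ => distOf_X1Y1 P1 P2 p2 q hP1 hP2 hp2 hq x1 y1

lemma sum_dY1i (i : Fin n) : ∑ c, dY1i P1 P2 p2 q i c = 1 := by
  unfold dY1i
  rw [sum_distOf, mw_total P1 P2 p2 q hP1 hP2 hp2 hq]

/-- The crucial bound: `∑ z, μ(z) F(z) ≤ 1`. -/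
lemma Fq_sum_le_one : ∑ z, mw P1 P2 p2 q z * Fq P1 P2 p2 q z ≤ 1 := by
  classical
  set C : (Fin n → A1) → (Fin n → B1) → ℝ := fun x1 y1 =>
    Kc P2 p2 q x1 y1 * (dY1 P1 P2 p2 q y1)⁻¹ * (∏ i, dY1i P1 P2 p2 q i (y1 i)) with hC
  set KI : (Fin n → A1) → (Fin n → B1) → ℝ := fun x1 y1 =>
    (∏ i, ki P2 p2 q i (x1 i) (y1 i))⁻¹ with hKI
  set R : (Fin n → B2) → ℝ := fun y2 => ∏ i, ri P2 p2 i (y2 i) with hR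
  have hCnn : ∀ x1 y1, 0 ≤ C x1 y1 := fun x1 y1 =>
    mul_nonneg (mul_nonneg (Kc_nonneg P1 P2 p2 q hP1 hP2 hp2 hq x1 y1)
      (inv_nonneg.2 (distOf_nonneg (mw_nonneg P1 P2 p2 q hP1 hP2 hp2 hq) _ _)))
      (Finset.prod_nonneg fun i _ => distOf_nonneg (mw_nonneg P1 P2 p2 q hP1 hP2 hp2 hq) _ _)
  have hKInn : ∀ x1 y1, 0 ≤ KI x1 y1 := fun x1 y1 =>
    inv_nonneg.2 (Finset.prod_nonneg fun i _ => ki_nonneg P1 P2 p2 q hP1 hP2 hp2 hq i _ _)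
  have hRnn : ∀ y2, 0 ≤ R y2 :=
    fun y2 => Finset.prod_nonneg fun i _ => ri_nonneg P1 P2 p2 q hP1 hP2 hp2 hq i _
  have hQnn : ∀ (x1 : Fin n → A1) (y1 : Fin n → B1) (y2 : Fin n → B2),
      0 ≤ ∏ i, q (x1 i) (y2 i) (y1 i) :=
    fun x1 y1 y2 => Finset.prod_nonneg fun i _ => (hq _ _).1 _
  have step1 : ∑ z, mw P1 P2 p2 q z * Fq P1 P2 p2 q z
      = ∑ x1 : Fin n → A1, ∑ y1 : Fin n → B1, ∑ y2 : Fin n → B2,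
          (P1 x1 * (∏ i, q (x1 i) (y2 i) (y1 i)) * (C x1 y1 * R y2 * KI x1 y1)) *
            (rn P2 p2 y2 * (rn P2 p2 y2)⁻¹) := by
    unfold mw Fq
    simp only [Fintype.sum_prod_type, ← hC, ← hKI, ← hR]
    refine Finset.sum_congr rfl fun x1 _ => ?_
    rw [Finset.sum_comm]
    refine Finset.sum_congr rfl fun y1 _ => ?_
    rw [Finset.sum_comm]
    refine Finset.sum_congr rfl fun y2 _ => ?_
    calc ∑ x2 : Fin n → A2,
        P1 x1 * P2 x2 * (∏ i, (p2 (x2 i) (y2 i) * q (x1 i) (y2 i) (y1 i))) *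
          (C x1 y1 * ((rn P2 p2 y2)⁻¹ * R y2) * KI x1 y1)
        = ∑ x2 : Fin n → A2, (P2 x2 * ∏ i, p2 (x2 i) (y2 i)) *
            ((P1 x1 * (∏ i, q (x1 i) (y2 i) (y1 i)) * (C x1 y1 * R y2 * KI x1 y1)) *
              (rn P2 p2 y2)⁻¹) := by
          refine Finset.sum_congr rfl fun x2 _ => ?_
          rw [Finset.prod_mul_distrib]
          ring
      _ = (∑ x2 : Fin n → A2, P2 x2 * ∏ i, p2 (x2 i) (y2 i)) *
            ((P1 x1 * (∏ i, q (x1 i) (y2 i) (y1 i)) * (C x1 y1 * R y2 * KI x1 y1)) *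
              (rn P2 p2 y2)⁻¹) := by rw [Finset.sum_mul]
      _ = _ := by rw [show (∑ x2 : Fin n → A2, P2 x2 * ∏ i, p2 (x2 i) (y2 i)) = rn P2 p2 y2
              from rfl]; ring
  have step2 : ∑ x1 : Fin n → A1, ∑ y1 : Fin n → B1, ∑ y2 : Fin n → B2,
      (P1 x1 * (∏ i, q (x1 i) (y2 i) (y1 i)) * (C x1 y1 * R y2 * KI x1 y1)) *
        (rn P2 p2 y2 * (rn P2 p2 y2)⁻¹)
      ≤ ∑ x1 : Fin n → A1, ∑ y1 : Fin n → B1, ∑ y2 : Fin n → B2,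
          P1 x1 * (∏ i, q (x1 i) (y2 i) (y1 i)) * (C x1 y1 * R y2 * KI x1 y1) := by
    refine Finset.sum_le_sum fun x1 _ => Finset.sum_le_sum fun y1 _ =>
      Finset.sum_le_sum fun y2 _ => ?_
    have hnn : 0 ≤ P1 x1 * (∏ i, q (x1 i) (y2 i) (y1 i)) * (C x1 y1 * R y2 * KI x1 y1) :=
      mul_nonneg (mul_nonneg (hP1.1 _) (hQnn x1 y1 y2))
        (mul_nonneg (mul_nonneg (hCnn x1 y1) (hRnn y2)) (hKInn x1 y1))
    calc P1 x1 * (∏ i, q (x1 i) (y2 i) (y1 i)) * (C x1 y1 * R y2 * KI x1 y1) *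
          (rn P2 p2 y2 * (rn P2 p2 y2)⁻¹)
        ≤ P1 x1 * (∏ i, q (x1 i) (y2 i) (y1 i)) * (C x1 y1 * R y2 * KI x1 y1) * 1 :=
          mul_le_mul_of_nonneg_left
            (mul_inv_self_le_one (rn_nonneg P1 P2 p2 q hP1 hP2 hp2 hq y2)) hnn
      _ = _ := mul_one _
  have step3 : ∑ x1 : Fin n → A1, ∑ y1 : Fin n → B1, ∑ y2 : Fin n → B2,
      P1 x1 * (∏ i, q (x1 i) (y2 i) (y1 i)) * (C x1 y1 * R y2 * KI x1 y1)
      = ∑ x1 : Fin n → A1, ∑ y1 : Fin n → B1,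
          (P1 x1 * C x1 y1) *
            ((∏ i, ki P2 p2 q i (x1 i) (y1 i)) * (∏ i, ki P2 p2 q i (x1 i) (y1 i))⁻¹) := by
    refine Finset.sum_congr rfl fun x1 _ => Finset.sum_congr rfl fun y1 _ => ?_
    calc ∑ y2 : Fin n → B2,
        P1 x1 * (∏ i, q (x1 i) (y2 i) (y1 i)) * (C x1 y1 * R y2 * KI x1 y1)
        = ∑ y2 : Fin n → B2, (∏ i, (q (x1 i) (y2 i) (y1 i) * ri P2 p2 i (y2 i))) *
            (P1 x1 * C x1 y1 * KI x1 y1) := by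
          refine Finset.sum_congr rfl fun y2 _ => ?_
          rw [Finset.prod_mul_distrib, hR]
          ring
      _ = (∑ y2 : Fin n → B2, ∏ i, (q (x1 i) (y2 i) (y1 i) * ri P2 p2 i (y2 i))) *
            (P1 x1 * C x1 y1 * KI x1 y1) := by rw [Finset.sum_mul]
      _ = (∏ i, ki P2 p2 q i (x1 i) (y1 i)) * (P1 x1 * C x1 y1 * KI x1 y1) := by
          rw [sum_prod_eval (fun i b => q (x1 i) b (y1 i) * ri P2 p2 i b)]
          congr 1
          refine Finset.prod_congr rfl fun i _ => ?_
          unfold ki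
          exact Finset.sum_congr rfl fun b _ => by ring
      _ = _ := by rw [hKI]; ring
  have step4 : ∑ x1 : Fin n → A1, ∑ y1 : Fin n → B1,
      (P1 x1 * C x1 y1) *
        ((∏ i, ki P2 p2 q i (x1 i) (y1 i)) * (∏ i, ki P2 p2 q i (x1 i) (y1 i))⁻¹)
      ≤ ∑ x1 : Fin n → A1, ∑ y1 : Fin n → B1, P1 x1 * C x1 y1 := by
    refine Finset.sum_le_sum fun x1 _ => Finset.sum_le_sum fun y1 _ => ?_
    have hnn : 0 ≤ P1 x1 * C x1 y1 := mul_nonneg (hP1.1 _) (hCnn x1 y1)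
    calc (P1 x1 * C x1 y1) *
          ((∏ i, ki P2 p2 q i (x1 i) (y1 i)) * (∏ i, ki P2 p2 q i (x1 i) (y1 i))⁻¹)
        ≤ (P1 x1 * C x1 y1) * 1 := mul_le_mul_of_nonneg_left
            (mul_inv_self_le_one
              (Finset.prod_nonneg fun i _ => ki_nonneg P1 P2 p2 q hP1 hP2 hp2 hq i _ _)) hnn
      _ = _ := mul_one _
  have step5 : ∑ x1 : Fin n → A1, ∑ y1 : Fin n → B1, P1 x1 * C x1 y1
      = ∑ y1 : Fin n → B1,
          (dY1 P1 P2 p2 q y1 * (dY1 P1 P2 p2 q y1)⁻¹) * ∏ i, dY1i P1 P2 p2 q i (y1 i) := by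
    rw [Finset.sum_comm]
    refine Finset.sum_congr rfl fun y1 _ => ?_
    calc ∑ x1 : Fin n → A1, P1 x1 * C x1 y1
        = ∑ x1 : Fin n → A1, (P1 x1 * Kc P2 p2 q x1 y1) *
            ((dY1 P1 P2 p2 q y1)⁻¹ * ∏ i, dY1i P1 P2 p2 q i (y1 i)) := by
          refine Finset.sum_congr rfl fun x1 _ => ?_
          rw [hC]; ring
      _ = (∑ x1 : Fin n → A1, P1 x1 * Kc P2 p2 q x1 y1) *
            ((dY1 P1 P2 p2 q y1)⁻¹ * ∏ i, dY1i P1 P2 p2 q i (y1 i)) := by rw [Finset.sum_mul]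
      _ = _ := by
          rw [← dY1_eq P1 P2 p2 q hP1 hP2 hp2 hq y1]; ring
  have step6 : ∑ y1 : Fin n → B1,
      (dY1 P1 P2 p2 q y1 * (dY1 P1 P2 p2 q y1)⁻¹) * ∏ i, dY1i P1 P2 p2 q i (y1 i)
      ≤ ∑ y1 : Fin n → B1, ∏ i, dY1i P1 P2 p2 q i (y1 i) := by
    refine Finset.sum_le_sum fun y1 _ => ?_
    have hnn : 0 ≤ ∏ i, dY1i P1 P2 p2 q i (y1 i) :=
      Finset.prod_nonneg fun i _ => distOf_nonneg (mw_nonneg P1 P2 p2 q hP1 hP2 hp2 hq) _ _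
    calc (dY1 P1 P2 p2 q y1 * (dY1 P1 P2 p2 q y1)⁻¹) * ∏ i, dY1i P1 P2 p2 q i (y1 i)
        ≤ 1 * ∏ i, dY1i P1 P2 p2 q i (y1 i) := mul_le_mul_of_nonneg_right
            (mul_inv_self_le_one (distOf_nonneg (mw_nonneg P1 P2 p2 q hP1 hP2 hp2 hq) _ _)) hnn
      _ = _ := one_mul _
  have step7 : ∑ y1 : Fin n → B1, ∏ i, dY1i P1 P2 p2 q i (y1 i) = 1 := by
    rw [sum_prod_eval (fun i c => dY1i P1 P2 p2 q i c)]
    calc ∏ i : Fin n, ∑ c, dY1i P1 P2 p2 q i c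
        = ∏ i : Fin n, (1:ℝ) := Finset.prod_congr rfl fun i _ =>
            sum_dY1i P1 P2 p2 q hP1 hP2 hp2 hq i
      _ = 1 := Finset.prod_const_one
  calc ∑ z, mw P1 P2 p2 q z * Fq P1 P2 p2 q z = _ := step1
    _ ≤ _ := step2
    _ = _ := step3
    _ ≤ _ := step4
    _ = _ := step5
    _ ≤ _ := step6
    _ = 1 := step7

lemma distOf_X1i (i : Fin n) (a : A1) :
    distOf (mw P1 P2 p2 q) (fun z => z.1 i) a = P1i P1 i a := by
  have h := distOf_comp (mw P1 P2 p2 q) (fun z => z.1) (fun x1 => x1 i) a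
  rw [show (fun z : (Fin n → A1) × (Fin n → A2) × (Fin n → B1) × (Fin n → B2) => z.1 i)
      = (fun z : (Fin n → A1) × (Fin n → A2) × (Fin n → B1) × (Fin n → B2) =>
        (fun x1 : Fin n → A1 => x1 i) z.1) from rfl, h,
    distOf_X1 P1 P2 p2 q hP1 hP2 hp2 hq]
  rfl

lemma distOf_X2i (i : Fin n) (a : A2) :
    distOf (mw P1 P2 p2 q) (fun z => z.2.1 i) a = P2i P2 i a := by
  have h := distOf_comp (mw P1 P2 p2 q) (fun z => z.2.1) (fun x2 => x2 i) a
  rw [show (fun z : (Fin n → A1) × (Fin n → A2) × (Fin n → B1) × (Fin n → B2) => z.2.1 i)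
      = (fun z : (Fin n → A1) × (Fin n → A2) × (Fin n → B1) × (Fin n → B2) =>
        (fun x2 : Fin n → A2 => x2 i) z.2.1) from rfl, h,
    distOf_X2 P1 P2 p2 q hP1 hP2 hp2 hq]
  rfl

lemma distOf_Y2i (i : Fin n) (b : B2) :
    distOf (mw P1 P2 p2 q) (fun z => z.2.2.2 i) b = ri P2 p2 i b := by
  rw [distOf_marginal_snd (mw P1 P2 p2 q) (fun z => z.2.1 i) (fun z => z.2.2.2 i) b]
  unfold ri
  exact Finset.sum_congr rfl fun a _ => distOf_X2Y2i P1 P2 p2 q hP1 hP2 hp2 hq i a b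

lemma distOf_Y2 (y2 : Fin n → B2) :
    distOf (mw P1 P2 p2 q) (fun z => z.2.2.2) y2 = rn P2 p2 y2 := by
  rw [distOf_marginal_snd (mw P1 P2 p2 q) (fun z => z.2.1) (fun z => z.2.2.2) y2]
  unfold rn
  exact Finset.sum_congr rfl fun x2 _ => distOf_X2Y2 P1 P2 p2 q hP1 hP2 hp2 hq x2 y2

/-- The integrand produced by `MI_eq_sum` for the difference (RHS − LHS) of the theorem. -/
def brk : (Fin n → A1) × (Fin n → A2) × (Fin n → B1) × (Fin n → B2) → ℝ :=
  fun z =>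
  (∑ i : Fin n,
    ((Real.logb 2 (distOf (mw P1 P2 p2 q) (fun w => (w.1 i, w.2.2.1 i)) (z.1 i, z.2.2.1 i))
       - Real.logb 2 (distOf (mw P1 P2 p2 q) (fun w => w.1 i) (z.1 i))
       - Real.logb 2 (distOf (mw P1 P2 p2 q) (fun w => w.2.2.1 i) (z.2.2.1 i)))
     + (Real.logb 2 (distOf (mw P1 P2 p2 q) (fun w => (w.2.1 i, w.2.2.2 i)) (z.2.1 i, z.2.2.2 i))
       - Real.logb 2 (distOf (mw P1 P2 p2 q) (fun w => w.2.1 i) (z.2.1 i))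
       - Real.logb 2 (distOf (mw P1 P2 p2 q) (fun w => w.2.2.2 i) (z.2.2.2 i)))))
  - (Real.logb 2 (distOf (mw P1 P2 p2 q) (fun w => (w.1, w.2.2.1)) (z.1, z.2.2.1))
     - Real.logb 2 (distOf (mw P1 P2 p2 q) (fun w => w.1) z.1)
     - Real.logb 2 (distOf (mw P1 P2 p2 q) (fun w => w.2.2.1) z.2.2.1))
  - (Real.logb 2 (distOf (mw P1 P2 p2 q) (fun w => (w.2.1, w.2.2.2)) (z.2.1, z.2.2.2))
     - Real.logb 2 (distOf (mw P1 P2 p2 q) (fun w => w.2.1) z.2.1)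
     - Real.logb 2 (distOf (mw P1 P2 p2 q) (fun w => w.2.2.2) z.2.2.2))

lemma brk_ge (z : (Fin n → A1) × (Fin n → A2) × (Fin n → B1) × (Fin n → B2))
    (hz : 0 < mw P1 P2 p2 q z) :
    (1 - Fq P1 P2 p2 q z) / Real.log 2 ≤ brk P1 P2 p2 q z := by
  obtain ⟨x1, x2, y1, y2⟩ := z
  have hμnn := mw_nonneg P1 P2 p2 q hP1 hP2 hp2 hq
  -- positivity of all the basic factors
  have hfac : 0 < P1 x1 * P2 x2 *
      ∏ i, (p2 (x2 i) (y2 i) * q (x1 i) (y2 i) (y1 i)) := hz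
  have hprod_nn : ∀ i : Fin n, 0 ≤ p2 (x2 i) (y2 i) * q (x1 i) (y2 i) (y1 i) :=
    fun i => mul_nonneg ((hp2 _).1 _) ((hq _ _).1 _)
  have hP1x : 0 < P1 x1 := by
    rcases (hP1.1 x1).eq_or_lt with h | h
    · exfalso; rw [← h] at hfac; simp at hfac
    · exact h
  have hP2x : 0 < P2 x2 := by
    rcases (hP2.1 x2).eq_or_lt with h | h
    · exfalso; rw [← h] at hfac; simp at hfac
    · exact h
  have hprod : 0 < ∏ i, (p2 (x2 i) (y2 i) * q (x1 i) (y2 i) (y1 i)) := by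
    rcases (Finset.prod_nonneg fun i _ => hprod_nn i).eq_or_lt with h | h
    · exfalso; rw [← h] at hfac; simp at hfac
    · exact h
  have hpq : ∀ i : Fin n, 0 < p2 (x2 i) (y2 i) * q (x1 i) (y2 i) (y1 i) := by
    intro i
    rcases (hprod_nn i).eq_or_lt with h | h
    · exfalso
      have := Finset.prod_eq_zero
        (f := fun i => p2 (x2 i) (y2 i) * q (x1 i) (y2 i) (y1 i)) (Finset.mem_univ i) h.symm
      rw [this] at hprod; exact lt_irrefl 0 hprod
    · exact h
  have hp2x : ∀ i, 0 < p2 (x2 i) (y2 i) := by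
    intro i
    rcases ((hp2 _).1 (y2 i)).eq_or_lt with h | h
    · exfalso; have := hpq i; rw [← h] at this; simp at this
    · exact h
  have hqx : ∀ i, 0 < q (x1 i) (y2 i) (y1 i) := by
    intro i
    rcases ((hq _ _).1 (y1 i)).eq_or_lt with h | h
    · exfalso; have := hpq i; rw [← h] at this; simp at this
    · exact h
  -- positivity of the marginals at the current point
  have hP1ix : ∀ i, 0 < P1i P1 i (x1 i) :=
    fun i => lt_of_lt_of_le hP1x (le_distOf hP1.1 (fun x => x i) x1)
  have hP2ix : ∀ i, 0 < P2i P2 i (x2 i) :=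
    fun i => lt_of_lt_of_le hP2x (le_distOf hP2.1 (fun x => x i) x2)
  have hrix : ∀ i, 0 < ri P2 p2 i (y2 i) := by
    intro i
    rw [← distOf_Y2i P1 P2 p2 q hP1 hP2 hp2 hq i (y2 i)]
    exact lt_of_lt_of_le hz (le_distOf hμnn (fun w => w.2.2.2 i) (x1, x2, y1, y2))
  have hkix : ∀ i, 0 < ki P2 p2 q i (x1 i) (y1 i) := by
    intro i
    have hterm : 0 < ri P2 p2 i (y2 i) * q (x1 i) (y2 i) (y1 i) :=
      mul_pos (hrix i) (hqx i)
    have hle := Finset.single_le_sum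
      (f := fun b => ri P2 p2 i b * q (x1 i) b (y1 i))
      (fun b _ => mul_nonneg (ri_nonneg P1 P2 p2 q hP1 hP2 hp2 hq i b) ((hq _ _).1 _))
      (Finset.mem_univ (y2 i))
    exact lt_of_lt_of_le hterm hle
  have hdY1x : 0 < dY1 P1 P2 p2 q y1 :=
    lt_of_lt_of_le hz (le_distOf hμnn (fun w => w.2.2.1) (x1, x2, y1, y2))
  have hdY1ix : ∀ i, 0 < dY1i P1 P2 p2 q i (y1 i) :=
    fun i => lt_of_lt_of_le hz (le_distOf hμnn (fun w => w.2.2.1 i) (x1, x2, y1, y2))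
  have hrnx : 0 < rn P2 p2 y2 := by
    rw [← distOf_Y2 P1 P2 p2 q hP1 hP2 hp2 hq y2]
    exact lt_of_lt_of_le hz (le_distOf hμnn (fun w => w.2.2.2) (x1, x2, y1, y2))
  have hKcx : 0 < Kc P2 p2 q x1 y1 := by
    have hpair : 0 < P1 x1 * Kc P2 p2 q x1 y1 := by
      rw [← distOf_X1Y1 P1 P2 p2 q hP1 hP2 hp2 hq x1 y1]
      exact lt_of_lt_of_le hz (le_distOf hμnn (fun w => (w.1, w.2.2.1)) (x1, x2, y1, y2))
    rcases (Kc_nonneg P1 P2 p2 q hP1 hP2 hp2 hq x1 y1).eq_or_lt with h | h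
    · exfalso; rw [← h, mul_zero] at hpair; exact lt_irrefl 0 hpair
    · exact h
  have hFqx : 0 < Fq P1 P2 p2 q (x1, x2, y1, y2) := by
    unfold Fq
    exact mul_pos (mul_pos (mul_pos (mul_pos hKcx (inv_pos.2 hdY1x))
      (Finset.prod_pos fun i _ => hdY1ix i))
      (mul_pos (inv_pos.2 hrnx) (Finset.prod_pos fun i _ => hrix i)))
      (inv_pos.2 (Finset.prod_pos fun i _ => hkix i))
  -- the exact value of the bracket
  have hlog2 : (0:ℝ) < Real.log 2 := Real.log_pos one_lt_two
  have key : brk P1 P2 p2 q (x1, x2, y1, y2) = -Real.log (Fq P1 P2 p2 q (x1, x2, y1, y2)) / Real.log 2 := by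
    unfold brk
    dsimp only
    simp only [distOf_X1Y1i P1 P2 p2 q hP1 hP2 hp2 hq,
      distOf_X1i P1 P2 p2 q hP1 hP2 hp2 hq,
      distOf_X2Y2i P1 P2 p2 q hP1 hP2 hp2 hq,
      distOf_X2i P1 P2 p2 q hP1 hP2 hp2 hq,
      distOf_Y2i P1 P2 p2 q hP1 hP2 hp2 hq,
      distOf_X1Y1 P1 P2 p2 q hP1 hP2 hp2 hq,
      distOf_X1 P1 P2 p2 q hP1 hP2 hp2 hq,
      distOf_X2 P1 P2 p2 q hP1 hP2 hp2 hq,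
      distOf_X2Y2 P1 P2 p2 q hP1 hP2 hp2 hq,
      distOf_Y2 P1 P2 p2 q hP1 hP2 hp2 hq]
    rw [show distOf (mw P1 P2 p2 q) (fun w => w.2.2.1) = dY1 P1 P2 p2 q from rfl]
    have hdd : ∀ (i : Fin n) (c : B1),
        distOf (mw P1 P2 p2 q) (fun w => w.2.2.1 i) c = dY1i P1 P2 p2 q i c := fun i c => rfl
    simp only [hdd]
    have hT : ∀ i : Fin n,
        Real.logb 2 (P1i P1 i (x1 i) * ki P2 p2 q i (x1 i) (y1 i))
          - Real.logb 2 (P1i P1 i (x1 i)) - Real.logb 2 (dY1i P1 P2 p2 q i (y1 i))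
        + (Real.logb 2 (P2i P2 i (x2 i) * p2 (x2 i) (y2 i))
          - Real.logb 2 (P2i P2 i (x2 i)) - Real.logb 2 (ri P2 p2 i (y2 i)))
        = ((Real.log (ki P2 p2 q i (x1 i) (y1 i)) + Real.log (p2 (x2 i) (y2 i)))
            - Real.log (dY1i P1 P2 p2 q i (y1 i)) - Real.log (ri P2 p2 i (y2 i)))
            / Real.log 2 := by
      intro i
      simp only [Real.logb]
      rw [Real.log_mul (hP1ix i).ne' (hkix i).ne', Real.log_mul (hP2ix i).ne' (hp2x i).ne']
      ring
    rw [Finset.sum_congr rfl fun i _ => hT i]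
    simp only [Real.logb]
    have hprodp2 : 0 < ∏ i, p2 (x2 i) (y2 i) := Finset.prod_pos fun i _ => hp2x i
    rw [Real.log_mul hP1x.ne' hKcx.ne', Real.log_mul hP2x.ne' hprodp2.ne',
      Real.log_prod (fun i _ => (hp2x i).ne')]
    have hFlog : Real.log (Fq P1 P2 p2 q (x1, x2, y1, y2))
        = Real.log (Kc P2 p2 q x1 y1) - Real.log (dY1 P1 P2 p2 q y1)
          + (∑ i, Real.log (dY1i P1 P2 p2 q i (y1 i)))
          - Real.log (rn P2 p2 y2) + (∑ i, Real.log (ri P2 p2 i (y2 i)))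
          - (∑ i, Real.log (ki P2 p2 q i (x1 i) (y1 i))) := by
      unfold Fq
      dsimp only
      have a1 : 0 < Kc P2 p2 q x1 y1 * (dY1 P1 P2 p2 q y1)⁻¹ :=
        mul_pos hKcx (inv_pos.2 hdY1x)
      have a2 : 0 < Kc P2 p2 q x1 y1 * (dY1 P1 P2 p2 q y1)⁻¹
          * ∏ i, dY1i P1 P2 p2 q i (y1 i) :=
        mul_pos a1 (Finset.prod_pos fun i _ => hdY1ix i)
      have a3r : 0 < (rn P2 p2 y2)⁻¹ * ∏ i, ri P2 p2 i (y2 i) :=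
        mul_pos (inv_pos.2 hrnx) (Finset.prod_pos fun i _ => hrix i)
      have a3 : 0 < Kc P2 p2 q x1 y1 * (dY1 P1 P2 p2 q y1)⁻¹
          * (∏ i, dY1i P1 P2 p2 q i (y1 i)) * ((rn P2 p2 y2)⁻¹ * ∏ i, ri P2 p2 i (y2 i)) :=
        mul_pos a2 a3r
      rw [Real.log_mul a3.ne' (inv_pos.2 (Finset.prod_pos fun i _ => hkix i)).ne',
          Real.log_mul a2.ne' a3r.ne',
          Real.log_mul a1.ne' (Finset.prod_pos fun i _ => hdY1ix i).ne',
          Real.log_mul hKcx.ne' (inv_pos.2 hdY1x).ne',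
          Real.log_mul (inv_pos.2 hrnx).ne' (Finset.prod_pos fun i _ => hrix i).ne',
          Real.log_inv, Real.log_inv, Real.log_inv,
          Real.log_prod (fun i _ => (hdY1ix i).ne'),
          Real.log_prod (fun i _ => (hrix i).ne'),
          Real.log_prod (fun i _ => (hkix i).ne')]
      ring
    rw [hFlog]
    rw [← Finset.sum_div, Finset.sum_sub_distrib, Finset.sum_sub_distrib,
      Finset.sum_add_distrib]
    field_simp
    ring
  rw [key]
  have hlogle := Real.log_le_sub_one_of_pos hFqx
  rw [div_le_div_iff_of_pos_right hlog2]
  linarith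

lemma sum_brk_nonneg : 0 ≤ ∑ z, mw P1 P2 p2 q z * brk P1 P2 p2 q z := by
  have hμnn := mw_nonneg P1 P2 p2 q hP1 hP2 hp2 hq
  have hlog2 : (0:ℝ) < Real.log 2 := Real.log_pos one_lt_two
  have h1 : ∑ z, mw P1 P2 p2 q z * ((1 - Fq P1 P2 p2 q z) / Real.log 2)
      ≤ ∑ z, mw P1 P2 p2 q z * brk P1 P2 p2 q z := by
    refine Finset.sum_le_sum fun z _ => ?_
    rcases (hμnn z).eq_or_lt with h | h
    · rw [← h, zero_mul, zero_mul]
    · exact mul_le_mul_of_nonneg_left (brk_ge P1 P2 p2 q hP1 hP2 hp2 hq z h) (hμnn z)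
  have h2 : 0 ≤ ∑ z, mw P1 P2 p2 q z * ((1 - Fq P1 P2 p2 q z) / Real.log 2) := by
    have e : ∑ z, mw P1 P2 p2 q z * ((1 - Fq P1 P2 p2 q z) / Real.log 2)
        = ((∑ z, mw P1 P2 p2 q z) - ∑ z, mw P1 P2 p2 q z * Fq P1 P2 p2 q z) / Real.log 2 := by
      rw [← Finset.sum_sub_distrib, Finset.sum_div]
      refine Finset.sum_congr rfl fun z _ => ?_
      rw [← mul_div_assoc]
      congr 1
      ring
    rw [e]
    apply div_nonneg _ hlog2.le
    rw [mw_total P1 P2 p2 q hP1 hP2 hp2 hq]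
    have := Fq_sum_le_one P1 P2 p2 q hP1 hP2 hp2 hq
    linarith
  linarith
end Main


/-- For a DMZIC with weak interference used `n` times memorylessly with
independent (but otherwise arbitrary) input blocks,
`I(X1^n;Y1^n) + I(X2^n;Y2^n) ≤ ∑ i, [ I(X1i;Y1i) + I(X2i;Y2i) ]`. -/
theorem nLetter_sum_MI_bound_weak_DMZIC {A1 A2 B1 B2 : Type} [Fintype A1] [DecidableEq A1] [Fintype A2] [DecidableEq A2]
    [Fintype B1] [DecidableEq B1] [Fintype B2] [DecidableEq B2]
    (W : A1 → A2 → B1 × B2 → ℝ) (hW : IsChannel W) (hweak : WeakZ W) (n : ℕ)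
    (P1 : (Fin n → A1) → ℝ) (P2 : (Fin n → A2) → ℝ) (hP1 : IsPMF P1) (hP2 : IsPMF P2) :
    let μ : (Fin n → A1) × (Fin n → A2) × (Fin n → B1) × (Fin n → B2) → ℝ :=
      fun z => P1 z.1 * P2 z.2.1 * nFold W n z.1 z.2.1 (z.2.2.1, z.2.2.2)
    MI μ (fun z => z.1) (fun z => z.2.2.1) + MI μ (fun z => z.2.1) (fun z => z.2.2.2)
      ≤ ∑ i : Fin n,
          (MI μ (fun z => z.1 i) (fun z => z.2.2.1 i)
            + MI μ (fun z => z.2.1 i) (fun z => z.2.2.2 i)) := by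
  intro μ
  obtain ⟨p2, q, hp2, hq, hWeq⟩ := hweak
  have hμ : μ = mw P1 P2 p2 q := by
    funext z
    show P1 z.1 * P2 z.2.1 * nFold W n z.1 z.2.1 (z.2.2.1, z.2.2.2) = _
    unfold nFold mw
    congr 1
    exact Finset.prod_congr rfl fun i _ => hWeq (z.1 i) (z.2.1 i) (z.2.2.1 i) (z.2.2.2 i)
  rw [hμ]
  rw [MI_eq_sum (mw P1 P2 p2 q) (fun z => z.1) (fun z => z.2.2.1),
      MI_eq_sum (mw P1 P2 p2 q) (fun z => z.2.1) (fun z => z.2.2.2)]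
  have hR : ∀ i : Fin n,
      MI (mw P1 P2 p2 q) (fun z => z.1 i) (fun z => z.2.2.1 i)
        + MI (mw P1 P2 p2 q) (fun z => z.2.1 i) (fun z => z.2.2.2 i)
      = ∑ z, mw P1 P2 p2 q z *
          ((Real.logb 2 (distOf (mw P1 P2 p2 q) (fun w => (w.1 i, w.2.2.1 i)) (z.1 i, z.2.2.1 i))
            - Real.logb 2 (distOf (mw P1 P2 p2 q) (fun w => w.1 i) (z.1 i))
            - Real.logb 2 (distOf (mw P1 P2 p2 q) (fun w => w.2.2.1 i) (z.2.2.1 i)))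
          + (Real.logb 2 (distOf (mw P1 P2 p2 q) (fun w => (w.2.1 i, w.2.2.2 i)) (z.2.1 i, z.2.2.2 i))
            - Real.logb 2 (distOf (mw P1 P2 p2 q) (fun w => w.2.1 i) (z.2.1 i))
            - Real.logb 2 (distOf (mw P1 P2 p2 q) (fun w => w.2.2.2 i) (z.2.2.2 i)))) := by
    intro i
    rw [MI_eq_sum (mw P1 P2 p2 q) (fun z => z.1 i) (fun z => z.2.2.1 i),
        MI_eq_sum (mw P1 P2 p2 q) (fun z => z.2.1 i) (fun z => z.2.2.2 i),
        ← Finset.sum_add_distrib]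
    refine Finset.sum_congr rfl fun z _ => ?_
    ring
  rw [Finset.sum_congr rfl fun i _ => hR i, Finset.sum_comm]
  rw [← sub_nonneg]
  have e : (∑ z, ∑ i : Fin n, mw P1 P2 p2 q z *
        ((Real.logb 2 (distOf (mw P1 P2 p2 q) (fun w => (w.1 i, w.2.2.1 i)) (z.1 i, z.2.2.1 i))
          - Real.logb 2 (distOf (mw P1 P2 p2 q) (fun w => w.1 i) (z.1 i))
          - Real.logb 2 (distOf (mw P1 P2 p2 q) (fun w => w.2.2.1 i) (z.2.2.1 i)))
        + (Real.logb 2 (distOf (mw P1 P2 p2 q) (fun w => (w.2.1 i, w.2.2.2 i)) (z.2.1 i, z.2.2.2 i))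
          - Real.logb 2 (distOf (mw P1 P2 p2 q) (fun w => w.2.1 i) (z.2.1 i))
          - Real.logb 2 (distOf (mw P1 P2 p2 q) (fun w => w.2.2.2 i) (z.2.2.2 i)))))
      - (∑ z, mw P1 P2 p2 q z *
          (Real.logb 2 (distOf (mw P1 P2 p2 q) (fun w => (w.1, w.2.2.1)) (z.1, z.2.2.1))
            - Real.logb 2 (distOf (mw P1 P2 p2 q) (fun w => w.1) z.1)
            - Real.logb 2 (distOf (mw P1 P2 p2 q) (fun w => w.2.2.1) z.2.2.1))
        + ∑ z, mw P1 P2 p2 q z *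
          (Real.logb 2 (distOf (mw P1 P2 p2 q) (fun w => (w.2.1, w.2.2.2)) (z.2.1, z.2.2.2))
            - Real.logb 2 (distOf (mw P1 P2 p2 q) (fun w => w.2.1) z.2.1)
            - Real.logb 2 (distOf (mw P1 P2 p2 q) (fun w => w.2.2.2) z.2.2.2)))
      = ∑ z, mw P1 P2 p2 q z * brk P1 P2 p2 q z := by
    rw [← Finset.sum_add_distrib, ← Finset.sum_sub_distrib]
    refine Finset.sum_congr rfl fun z _ => ?_
    rw [← Finset.mul_sum]
    unfold brk
    ring
  rw [e]
  exact sum_brk_nonneg P1 P2 p2 q hP1 hP2 hp2 hq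

end IT
end
end

section
/- Let a DMZIC with weak interference be used n times memorylessly with input blocks X1^n and X2^n independent of each other, and outputs Y1^n, Y2^n. Then for every i in {1,...,n}, the triple ((X1^{i-1},X1_{i+1}^n), (X1i, Y2^{i-1}), Y1i) forms a Markov chain, i.e., Y1i is conditionally independent of (X1^{i-1},X1_{i+1}^n) given (X1i, Y2^{i-1}). -/
open scoped BigOperators

noncomputable section

namespace IT

lemma sum_pi_prod {n : ℕ} {β : Type*} [Fintype β] [DecidableEq β] (G : Fin n → β → ℝ) :
    ∑ f : Fin n → β, ∏ j, G j (f j) = ∏ j, ∑ y, G j y := by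
  rw [Finset.prod_univ_sum, Fintype.piFinset_univ]

lemma sum_pi_ite_point {n : ℕ} {β : Type*} [Fintype β] [DecidableEq β] (i : Fin n) (b : β)
    (G : Fin n → β → ℝ) (h : ∀ j, ∑ y, G j y = 1) :
    ∑ f : Fin n → β, (if f i = b then ∏ j, G j (f j) else 0) = G i b := by
  have key : ∀ f : Fin n → β, (if f i = b then ∏ j, G j (f j) else 0)
      = ∏ j, (fun j y => if j = i then (if y = b then G j y else 0) else G j y) j (f j) := by
    intro f
    by_cases hf : f i = b
    · rw [if_pos hf]
      refine Finset.prod_congr rfl fun j _ => ?_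
      by_cases hj : j = i
      · subst hj; simp [hf]
      · simp [hj]
    · rw [if_neg hf]
      symm
      apply Finset.prod_eq_zero (Finset.mem_univ i)
      simp [hf]
  simp only [key]
  have h2 := sum_pi_prod (fun j y => if j = i then (if y = b then G j y else 0) else G j y)
  rw [h2]
  rw [Finset.prod_eq_single i (fun j _ hj => by simp [hj, h j]) (fun h' => absurd (Finset.mem_univ i) h')]
  simp [Finset.sum_ite_eq']

lemma sum_pi_ite_prefix {n : ℕ} {β : Type*} [Fintype β] [DecidableEq β] (i : Fin n)
    (yp : {j : Fin n // j < i} → β) (G : Fin n → β → ℝ) :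
    ∑ f : Fin n → β, (if (fun j : {j : Fin n // j < i} => f j.1) = yp then ∏ j, G j (f j) else 0)
      = ∏ j, (if h : j < i then G j (yp ⟨j, h⟩) else ∑ y, G j y) := by
  have key : ∀ f : Fin n → β,
      (if (fun j : {j : Fin n // j < i} => f j.1) = yp then ∏ j, G j (f j) else 0)
        = ∏ j, (fun j y => if h : j < i then (if y = yp ⟨j, h⟩ then G j y else 0) else G j y) j (f j) := by
    intro f
    by_cases hf : (fun j : {j : Fin n // j < i} => f j.1) = yp
    · rw [if_pos hf]
      refine Finset.prod_congr rfl fun j _ => ?_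
      by_cases hj : j < i
      · have : f j = yp ⟨j, hj⟩ := congrFun hf ⟨j, hj⟩
        simp [hj, this]
      · simp [hj]
    · rw [if_neg hf]
      symm
      have hex : ∃ j : {j : Fin n // j < i}, f j.1 ≠ yp j := by
        by_contra hcon
        push_neg at hcon
        exact hf (funext fun j => hcon j)
      obtain ⟨j, hje⟩ := hex
      apply Finset.prod_eq_zero (Finset.mem_univ j.1)
      simp [j.2, hje]
  simp only [key]
  have h2 := sum_pi_prod (fun j y => if h : j < i then (if y = yp ⟨j, h⟩ then G j y else 0) else G j y)
  rw [h2]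
  refine Finset.prod_congr rfl fun j _ => ?_
  by_cases hj : j < i
  · simp [hj, Finset.sum_ite_eq']
  · simp [hj]

lemma sum_restrict_point {n : ℕ} {α : Type*} [Fintype α] [DecidableEq α] (i : Fin n)
    (a : {j : Fin n // j ≠ i} → α) (v : α) (Φ : (Fin n → α) → ℝ) :
    ∑ f : Fin n → α, (if ((fun j : {j : Fin n // j ≠ i} => f j.1) = a ∧ f i = v) then Φ f else 0)
      = Φ (fun j => if h : j = i then v else a ⟨j, h⟩) := by
  have hcond : ∀ f : Fin n → α,
      ((fun j : {j : Fin n // j ≠ i} => f j.1) = a ∧ f i = v)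
        ↔ f = (fun j => if h : j = i then v else a ⟨j, h⟩) := by
    intro f
    constructor
    · rintro ⟨h1, h2⟩
      funext j
      by_cases hj : j = i
      · subst hj; simp [h2]
      · simp [hj, ← congrFun h1 ⟨j, hj⟩]
    · rintro rfl
      refine ⟨funext fun j => ?_, ?_⟩
      · simp [j.2]
      · simp
  simp only [hcond]
  simp [Finset.sum_ite_eq']

lemma keyB {n : ℕ} {B1 B2 : Type*} [Fintype B1] [DecidableEq B1] [Fintype B2] [DecidableEq B2]
    (i : Fin n) (b : B1) (yp : {j : Fin n // j < i} → B2)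
    (Pj : Fin n → B2 → ℝ) (Qj : Fin n → B2 → B1 → ℝ)
    (hP : ∀ j, ∑ y, Pj j y = 1) (hQ : ∀ j y2, ∑ y1, Qj j y2 y1 = 1) :
    ∑ y1 : Fin n → B1, ∑ y2 : Fin n → B2,
      (if (y1 i = b ∧ (fun j : {j : Fin n // j < i} => y2 j.1) = yp)
        then ∏ j, Pj j (y2 j) * Qj j (y2 j) (y1 j) else 0)
      = ∏ j, (if h : j < i then Pj j (yp ⟨j, h⟩)
          else if j = i then ∑ y, Pj i y * Qj i y b else 1) := by
  rw [Finset.sum_comm]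
  have step1 : ∀ y2 : Fin n → B2,
      ∑ y1 : Fin n → B1, (if (y1 i = b ∧ (fun j : {j : Fin n // j < i} => y2 j.1) = yp)
        then ∏ j, Pj j (y2 j) * Qj j (y2 j) (y1 j) else 0)
      = (if (fun j : {j : Fin n // j < i} => y2 j.1) = yp
          then ∏ j, (Pj j (y2 j) * if j = i then Qj j (y2 j) b else 1) else 0) := by
    intro y2
    by_cases hp : (fun j : {j : Fin n // j < i} => y2 j.1) = yp
    · rw [if_pos hp]
      simp only [hp, eq_self_iff_true, and_true]
      have e1 : ∀ y1 : Fin n → B1,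
          (if y1 i = b then ∏ j, Pj j (y2 j) * Qj j (y2 j) (y1 j) else 0)
            = (∏ j, Pj j (y2 j)) * (if y1 i = b then ∏ j, Qj j (y2 j) (y1 j) else 0) := by
        intro y1; rw [mul_ite, mul_zero, Finset.prod_mul_distrib]
      simp only [e1]
      rw [← Finset.mul_sum]
      have e2 := sum_pi_ite_point i b (fun j y => Qj j (y2 j) y) (fun j => hQ j (y2 j))
      rw [e2, Finset.prod_mul_distrib]
      congr 1
      rw [Finset.prod_eq_single i (fun j _ hj => if_neg hj)
        (fun h' => absurd (Finset.mem_univ i) h'), if_pos rfl]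
    · simp [hp]
  simp only [step1]
  have e3 := sum_pi_ite_prefix i yp (fun j y => Pj j y * if j = i then Qj j y b else 1)
  rw [e3]
  refine Finset.prod_congr rfl fun j _ => ?_
  by_cases hj : j < i
  · have hne : j ≠ i := ne_of_lt hj
    simp [hj, hne]
  · rw [dif_neg hj, dif_neg hj]
    by_cases hji : j = i
    · subst hji; simp
    · simp [hji, hP j]

lemma keyB2 {n : ℕ} {B1 B2 : Type*} [Fintype B1] [DecidableEq B1] [Fintype B2] [DecidableEq B2]
    (i : Fin n) (yp : {j : Fin n // j < i} → B2)
    (Pj : Fin n → B2 → ℝ) (Qj : Fin n → B2 → B1 → ℝ)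
    (hP : ∀ j, ∑ y, Pj j y = 1) (hQ : ∀ j y2, ∑ y1, Qj j y2 y1 = 1) :
    ∑ y1 : Fin n → B1, ∑ y2 : Fin n → B2,
      (if (fun j : {j : Fin n // j < i} => y2 j.1) = yp
        then ∏ j, Pj j (y2 j) * Qj j (y2 j) (y1 j) else 0)
      = ∏ j, (if h : j < i then Pj j (yp ⟨j, h⟩) else 1) := by
  rw [Finset.sum_comm]
  have step1 : ∀ y2 : Fin n → B2,
      ∑ y1 : Fin n → B1, (if (fun j : {j : Fin n // j < i} => y2 j.1) = yp
        then ∏ j, Pj j (y2 j) * Qj j (y2 j) (y1 j) else 0)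
      = (if (fun j : {j : Fin n // j < i} => y2 j.1) = yp then ∏ j, Pj j (y2 j) else 0) := by
    intro y2
    by_cases hp : (fun j : {j : Fin n // j < i} => y2 j.1) = yp
    · rw [if_pos hp]
      simp only [hp, eq_self_iff_true, if_true]
      simp only [Finset.prod_mul_distrib]
      rw [← Finset.mul_sum]
      have e2 := sum_pi_prod (fun j y => Qj j (y2 j) y)
      rw [e2]
      have : ∀ j, ∑ y, Qj j (y2 j) y = 1 := fun j => hQ j (y2 j)
      simp [this]
    · simp [hp]
  simp only [step1]
  rw [sum_pi_ite_prefix i yp Pj]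
  refine Finset.prod_congr rfl fun j _ => ?_
  by_cases hj : j < i
  · simp [hj]
  · simp [hj, hP j]


/-- For a weak-interference DMZIC used `n` times with independent input
blocks, for each `i` the triple `((X1^{i-1}, X1_{i+1}^n), (X1i, Y2^{i-1}), Y1i)` forms a
Markov chain: `Y1i` is conditionally independent of `(X1^{i-1}, X1_{i+1}^n)` given
`(X1i, Y2^{i-1})`. -/
theorem weak_DMZIC_per_letter_markov {A1 A2 B1 B2 : Type} [Fintype A1] [DecidableEq A1] [Fintype A2] [DecidableEq A2]
    [Fintype B1] [DecidableEq B1] [Fintype B2] [DecidableEq B2]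
    (W : A1 → A2 → B1 × B2 → ℝ) (hW : IsChannel W) (hweak : WeakZ W) (n : ℕ)
    (P1 : (Fin n → A1) → ℝ) (P2 : (Fin n → A2) → ℝ) (hP1 : IsPMF P1) (hP2 : IsPMF P2)
    (i : Fin n) :
    let μ : (Fin n → A1) × (Fin n → A2) × (Fin n → B1) × (Fin n → B2) → ℝ :=
      fun z => P1 z.1 * P2 z.2.1 * nFold W n z.1 z.2.1 (z.2.2.1, z.2.2.2)
    CondIndep μ
      (fun z => fun j : {j : Fin n // j ≠ i} => z.1 j.1)
      (fun z => z.2.2.1 i)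
      (fun z => (z.1 i, fun j : {j : Fin n // j < i} => z.2.2.2 j.1)) := by
  intro μ
  have hμ : μ = (fun z : (Fin n → A1) × (Fin n → A2) × (Fin n → B1) × (Fin n → B2) =>
      P1 z.1 * P2 z.2.1 * nFold W n z.1 z.2.1 (z.2.2.1, z.2.2.2)) := rfl
  obtain ⟨p2, q, hp2, hq, hWeq⟩ := hweak
  simp only [CondIndep]
  intro a b c
  obtain ⟨v, yp⟩ := c
  set xhat : Fin n → A1 := (fun j => if h : j = i then v else a ⟨j, h⟩) with hxhat
  set S : ℝ := ∑ x1 : Fin n → A1, (if x1 i = v then P1 x1 else 0) with hS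
  set F : ℝ := ∑ x2 : Fin n → A2, P2 x2 * ∏ j, (if h : j < i then p2 (x2 j) (yp ⟨j, h⟩)
      else if j = i then ∑ y, p2 (x2 i) y * q v y b else 1) with hF
  set G : ℝ := ∑ x2 : Fin n → A2, P2 x2 * ∏ j, (if h : j < i then p2 (x2 j) (yp ⟨j, h⟩)
      else 1) with hG
  have h1 : distOf μ (fun ω => ((fun j : {j : Fin n // j ≠ i} => ω.1 j.1), ω.2.2.1 i,
      (ω.1 i, fun j : {j : Fin n // j < i} => ω.2.2.2 j.1))) (a, b, (v, yp)) = P1 xhat * F := by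
    simp only [distOf, hμ, nFold, Fintype.sum_prod_type, Prod.mk.injEq, hWeq]
    have e : ∀ x1 : Fin n → A1,
        (∑ x2 : Fin n → A2, ∑ y1 : Fin n → B1, ∑ y2 : Fin n → B2,
          if ((fun j : {j : Fin n // j ≠ i} => x1 j.1) = a ∧ y1 i = b ∧ x1 i = v
              ∧ (fun j : {j : Fin n // j < i} => y2 j.1) = yp)
          then P1 x1 * P2 x2 * ∏ j, p2 (x2 j) (y2 j) * q (x1 j) (y2 j) (y1 j) else 0)
        = (if ((fun j : {j : Fin n // j ≠ i} => x1 j.1) = a ∧ x1 i = v)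
            then P1 x1 * F else 0) := by
      intro x1
      by_cases hc : ((fun j : {j : Fin n // j ≠ i} => x1 j.1) = a ∧ x1 i = v)
      · rw [if_pos hc]
        obtain ⟨h1a, h1v⟩ := hc
        simp only [h1a, h1v, eq_self_iff_true, true_and]
        rw [hF, Finset.mul_sum]
        refine Finset.sum_congr rfl fun x2 _ => ?_
        have hkey := keyB i b yp (fun j => p2 (x2 j)) (fun j => q (x1 j))
          (fun j => (hp2 (x2 j)).2) (fun j y2 => (hq (x1 j) y2).2)
        rw [h1v] at hkey
        rw [← hkey, ← mul_assoc, Finset.mul_sum]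
        refine Finset.sum_congr rfl fun y1 _ => ?_
        rw [Finset.mul_sum]
        refine Finset.sum_congr rfl fun y2 _ => ?_
        rw [mul_ite, mul_zero]
      · rw [if_neg hc]
        refine Finset.sum_eq_zero fun x2 _ => Finset.sum_eq_zero fun y1 _ =>
          Finset.sum_eq_zero fun y2 _ => if_neg fun hcon => hc ⟨hcon.1, hcon.2.2.1⟩
    refine Eq.trans (Finset.sum_congr rfl fun x1 _ => e x1) ?_
    have hr := sum_restrict_point i a v (fun f => P1 f * F)
    rw [hr, ← hxhat]
  have h3 : distOf μ (fun ω => ((fun j : {j : Fin n // j ≠ i} => ω.1 j.1),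
      (ω.1 i, fun j : {j : Fin n // j < i} => ω.2.2.2 j.1))) (a, (v, yp)) = P1 xhat * G := by
    simp only [distOf, hμ, nFold, Fintype.sum_prod_type, Prod.mk.injEq, hWeq]
    have e : ∀ x1 : Fin n → A1,
        (∑ x2 : Fin n → A2, ∑ y1 : Fin n → B1, ∑ y2 : Fin n → B2,
          if ((fun j : {j : Fin n // j ≠ i} => x1 j.1) = a ∧ x1 i = v
              ∧ (fun j : {j : Fin n // j < i} => y2 j.1) = yp)
          then P1 x1 * P2 x2 * ∏ j, p2 (x2 j) (y2 j) * q (x1 j) (y2 j) (y1 j) else 0)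
        = (if ((fun j : {j : Fin n // j ≠ i} => x1 j.1) = a ∧ x1 i = v)
            then P1 x1 * G else 0) := by
      intro x1
      by_cases hc : ((fun j : {j : Fin n // j ≠ i} => x1 j.1) = a ∧ x1 i = v)
      · rw [if_pos hc]
        obtain ⟨h1a, h1v⟩ := hc
        simp only [h1a, h1v, eq_self_iff_true, true_and]
        rw [hG, Finset.mul_sum]
        refine Finset.sum_congr rfl fun x2 _ => ?_
        have hkey := keyB2 i yp (fun j => p2 (x2 j)) (fun j => q (x1 j))
          (fun j => (hp2 (x2 j)).2) (fun j y2 => (hq (x1 j) y2).2)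
        rw [← hkey, ← mul_assoc, Finset.mul_sum]
        refine Finset.sum_congr rfl fun y1 _ => ?_
        rw [Finset.mul_sum]
        refine Finset.sum_congr rfl fun y2 _ => ?_
        rw [mul_ite, mul_zero]
      · rw [if_neg hc]
        refine Finset.sum_eq_zero fun x2 _ => Finset.sum_eq_zero fun y1 _ =>
          Finset.sum_eq_zero fun y2 _ => if_neg fun hcon => hc ⟨hcon.1, hcon.2.1⟩
    refine Eq.trans (Finset.sum_congr rfl fun x1 _ => e x1) ?_
    have hr := sum_restrict_point i a v (fun f => P1 f * G)
    rw [hr, ← hxhat]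
  have h2 : distOf μ (fun ω => (ω.1 i, fun j : {j : Fin n // j < i} => ω.2.2.2 j.1))
      (v, yp) = S * G := by
    simp only [distOf, hμ, nFold, Fintype.sum_prod_type, Prod.mk.injEq, hWeq]
    have e : ∀ x1 : Fin n → A1,
        (∑ x2 : Fin n → A2, ∑ y1 : Fin n → B1, ∑ y2 : Fin n → B2,
          if (x1 i = v ∧ (fun j : {j : Fin n // j < i} => y2 j.1) = yp)
          then P1 x1 * P2 x2 * ∏ j, p2 (x2 j) (y2 j) * q (x1 j) (y2 j) (y1 j) else 0)
        = (if x1 i = v then P1 x1 * G else 0) := by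
      intro x1
      by_cases hv : x1 i = v
      · rw [if_pos hv]
        simp only [hv, eq_self_iff_true, true_and]
        rw [hG, Finset.mul_sum]
        refine Finset.sum_congr rfl fun x2 _ => ?_
        have hkey := keyB2 i yp (fun j => p2 (x2 j)) (fun j => q (x1 j))
          (fun j => (hp2 (x2 j)).2) (fun j y2 => (hq (x1 j) y2).2)
        rw [← hkey, ← mul_assoc, Finset.mul_sum]
        refine Finset.sum_congr rfl fun y1 _ => ?_
        rw [Finset.mul_sum]
        refine Finset.sum_congr rfl fun y2 _ => ?_
        rw [mul_ite, mul_zero]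
      · rw [if_neg hv]
        refine Finset.sum_eq_zero fun x2 _ => Finset.sum_eq_zero fun y1 _ =>
          Finset.sum_eq_zero fun y2 _ => if_neg fun hcon => hv hcon.1
    refine Eq.trans (Finset.sum_congr rfl fun x1 _ => e x1) ?_
    rw [hS, Finset.sum_mul]
    refine Finset.sum_congr rfl fun x1 _ => ?_
    rw [ite_mul, zero_mul]
  have h4 : distOf μ (fun ω => (ω.2.2.1 i,
      (ω.1 i, fun j : {j : Fin n // j < i} => ω.2.2.2 j.1))) (b, (v, yp)) = S * F := by
    simp only [distOf, hμ, nFold, Fintype.sum_prod_type, Prod.mk.injEq, hWeq]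
    have e : ∀ x1 : Fin n → A1,
        (∑ x2 : Fin n → A2, ∑ y1 : Fin n → B1, ∑ y2 : Fin n → B2,
          if (y1 i = b ∧ x1 i = v ∧ (fun j : {j : Fin n // j < i} => y2 j.1) = yp)
          then P1 x1 * P2 x2 * ∏ j, p2 (x2 j) (y2 j) * q (x1 j) (y2 j) (y1 j) else 0)
        = (if x1 i = v then P1 x1 * F else 0) := by
      intro x1
      by_cases hv : x1 i = v
      · rw [if_pos hv]
        simp only [hv, eq_self_iff_true, true_and]
        rw [hF, Finset.mul_sum]
        refine Finset.sum_congr rfl fun x2 _ => ?_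
        have hkey := keyB i b yp (fun j => p2 (x2 j)) (fun j => q (x1 j))
          (fun j => (hp2 (x2 j)).2) (fun j y2 => (hq (x1 j) y2).2)
        rw [hv] at hkey
        rw [← hkey, ← mul_assoc, Finset.mul_sum]
        refine Finset.sum_congr rfl fun y1 _ => ?_
        rw [Finset.mul_sum]
        refine Finset.sum_congr rfl fun y2 _ => ?_
        rw [mul_ite, mul_zero]
      · rw [if_neg hv]
        refine Finset.sum_eq_zero fun x2 _ => Finset.sum_eq_zero fun y1 _ =>
          Finset.sum_eq_zero fun y2 _ => if_neg fun hcon => hv hcon.2.1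
    refine Eq.trans (Finset.sum_congr rfl fun x1 _ => e x1) ?_
    rw [hS, Finset.sum_mul]
    refine Finset.sum_congr rfl fun x1 _ => ?_
    rw [ite_mul, zero_mul]
  rw [h1, h2, h3, h4]
  ring


end IT
end
end
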